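/- Let (u_1, …, u_{n+1}) be an exchangeable random vector with values in {0,1}^{n+1} such that Σ_{s=1}^{n+1} u_s = n almost surely (i.e., it contains exactly n ones). Fix t with 0 ≤ t ≤ n and set V := Σ_{s=1}^{t+1} u_s. Then, almost surely, P(u_{t+1} = 1 ∣ u_{t+2}, …, u_{n+1}) = V/(t+1). -/

import Mathlib

open MeasureTheory

/-- Lemma E.2 special case: for an exchangeable `{0,1}`-valued vector `(u_1,…,u_{n+1})`
with exactly `n` ones a.s. (indices 0-based: `u ⟨s⟩` is the paper's `u_{s+1}`), fixing
`t ≤ n` and setting `V = ∑_{s=1}^{t+1} u_s`, one has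
`P(u_{t+1} = 1 ∣ u_{t+2}, …, u_{n+1}) = V/(t+1)` almost surely, where the conditional
probability is the conditional expectation of the indicator given the σ-algebra generated
by `u_{t+2}, …, u_{n+1}`. -/
theorem stmt_4 {Ω : Type*} [MeasureSpace Ω] [IsProbabilityMeasure (volume : Measure Ω)]
    (n : ℕ) (u : Fin (n + 1) → Ω → ℕ)
    (humeas : ∀ s, Measurable (u s))
    (hu01 : ∀ s ω, u s ω ≤ 1)
    (hexch : ∀ π : Equiv.Perm (Fin (n + 1)),
      Measure.map (fun ω => fun s => u (π s) ω) volume =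
        Measure.map (fun ω => fun s => u s ω) volume)
    (hsum : ∀ᵐ ω ∂volume, ∑ s, u s ω = n)
    (t : ℕ) (ht : t ≤ n)
    (V : Ω → ℕ) (hV : ∀ ω, V ω = ∑ s : Fin (n + 1), (if (s : ℕ) ≤ t then u s ω else 0))
    (G : MeasurableSpace Ω)
    (hG : G = MeasurableSpace.comap
        (fun ω => fun s : Fin (n + 1) => if t + 1 ≤ (s : ℕ) then u s ω else 0)
        inferInstance) :
    (volume[(fun ω => if u ⟨t, Nat.lt_succ_of_le ht⟩ ω = 1 then (1 : ℝ) else 0) | G])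
      =ᵐ[volume] fun ω => (V ω : ℝ) / ((t : ℝ) + 1) := by
  classical
  subst hG
  set tt : Fin (n + 1) := ⟨t, Nat.lt_succ_of_le ht⟩ with htt
  -- the "observed" map
  set Φ : Ω → (Fin (n + 1) → ℕ) :=
    fun ω => fun s : Fin (n + 1) => if t + 1 ≤ (s : ℕ) then u s ω else 0 with hΦ
  set Ψ : Ω → (Fin (n + 1) → ℕ) := fun ω => fun s : Fin (n + 1) => u s ω with hΨ
  have hΦmeas : Measurable Φ := by
    apply measurable_pi_lambda
    intro s
    by_cases h : t + 1 ≤ (s : ℕ)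
    · simpa [hΦ, h, (by omega : t < (s : ℕ))] using humeas s
    · simp [hΦ, h, if_neg (show ¬ t < (s : ℕ) by omega)]
  have hm : MeasurableSpace.comap Φ inferInstance ≤
      (inferInstance : MeasurableSpace Ω) := hΦmeas.comap_le
  -- f i = indicator that u i = 1
  set f : Fin (n + 1) → Ω → ℝ := fun i ω => if u i ω = 1 then (1 : ℝ) else 0 with hf
  have hfmeas : ∀ i, Measurable (f i) := by
    intro i
    have : MeasurableSet {ω | u i ω = 1} := humeas i (measurableSet_singleton 1)
    exact Measurable.ite this measurable_const measurable_const
  have hfint : ∀ i, Integrable (f i) volume := by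
    intro i
    refine (integrable_const (1 : ℝ)).mono' (hfmeas i).aestronglyMeasurable ?_
    filter_upwards with ω
    by_cases h : u i ω = 1 <;> simp [hf, h]
  -- f i ω = u i ω as reals
  have hfu : ∀ i ω, f i ω = (u i ω : ℝ) := by
    intro i ω
    rcases Nat.le_one_iff_eq_zero_or_eq_one.mp (hu01 i ω) with h | h <;> simp [hf, h]
  -- V is bounded and measurable
  have hVmeas : Measurable V := by
    have : Measurable fun ω => ∑ s : Fin (n + 1), (if (s : ℕ) ≤ t then u s ω else 0) := by
      apply Finset.measurable_sum
      intro s _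
      by_cases h : (s : ℕ) ≤ t
      · simpa [h] using humeas s
      · simp [h]
    simpa [funext hV] using this
  have hVle : ∀ ω, (V ω : ℝ) ≤ (n : ℝ) + 1 := by
    intro ω
    have : V ω ≤ n + 1 := by
      rw [hV]
      calc ∑ s : Fin (n + 1), (if (s : ℕ) ≤ t then u s ω else 0)
          ≤ ∑ _s : Fin (n + 1), 1 := by
            apply Finset.sum_le_sum
            intro s _
            by_cases h : (s : ℕ) ≤ t <;> simp [h, hu01 s ω]
        _ = n + 1 := by simp
    exact_mod_cast this
  set g : Ω → ℝ := fun ω => (V ω : ℝ) / ((t : ℝ) + 1) with hg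
  have hgmeas : Measurable g :=
    (measurable_from_top.comp hVmeas).div_const _
  have hgint : Integrable g volume := by
    refine (integrable_const ((n : ℝ) + 1)).mono' hgmeas.aestronglyMeasurable ?_
    filter_upwards with ω
    rw [hg, Real.norm_eq_abs, abs_of_nonneg (by positivity)]
    have h2 : (V ω : ℝ) / ((t : ℝ) + 1) ≤ (V ω : ℝ) := by
      apply div_le_self (by positivity)
      have h3 : (0 : ℝ) ≤ (t : ℝ) := by positivity
      linarith
    exact h2.trans (hVle ω)
  haveI : SigmaFinite ((volume : Measure Ω).trim hm) := inferInstance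
  -- key exchange step: for i ≤ t, ∫_s f i = ∫_s f tt for comap-measurable sets s
  have key : ∀ (A : Set Ω), MeasurableSet[MeasurableSpace.comap Φ inferInstance] A →
      ∀ i : Fin (n + 1), (i : ℕ) ≤ t →
        ∫ ω in A, f i ω ∂volume = ∫ ω in A, f tt ω ∂volume := by
    intro A hA i hi
    obtain ⟨B, hB, hpre⟩ := hA
    -- mask function
    set mask : (Fin (n + 1) → ℕ) → (Fin (n + 1) → ℕ) :=
      fun v s => if t + 1 ≤ (s : ℕ) then v s else 0 with hmask
    have hmaskmeas : Measurable mask := by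
      apply measurable_pi_lambda
      intro s
      by_cases h : t + 1 ≤ (s : ℕ)
      · simpa [hmask, h, (by omega : t < (s : ℕ))] using measurable_pi_apply s
      · simp [hmask, h, if_neg (show ¬ t < (s : ℕ) by omega)]
    set gfun : (Fin (n + 1) → ℕ) → ℝ :=
      fun v => Set.indicator B (fun _ => (1 : ℝ)) (mask v) *
        (if v tt = 1 then (1 : ℝ) else 0) with hgfun
    have hgfmeas : Measurable gfun := by
      apply Measurable.mul
      · exact (measurable_const.indicator hB).comp hmaskmeas
      · have : MeasurableSet {v : Fin (n + 1) → ℕ | v tt = 1} :=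
          measurable_pi_apply tt (measurableSet_singleton 1)
        exact Measurable.ite this measurable_const measurable_const
    set π : Equiv.Perm (Fin (n + 1)) := Equiv.swap i tt with hπ
    have hΨπmeas : Measurable (fun ω => fun s => u (π s) ω) :=
      measurable_pi_lambda _ (fun s => humeas (π s))
    have hΨmeas : Measurable Ψ := measurable_pi_lambda _ (fun s => humeas s)
    -- the two compositions
    have hcomp1 : ∀ ω, gfun (fun s => u (π s) ω) = A.indicator (f i) ω := by
      intro ω
      have hmaskeq : mask (fun s => u (π s) ω) = Φ ω := by
        funext s
        by_cases h : t + 1 ≤ (s : ℕ)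
        · have hsi : s ≠ i := by
            intro h'; subst h'; omega
          have hst : s ≠ tt := by
            intro h'; rw [h'] at h; simp [htt] at h
          simp [hmask, hΦ, h, hπ, Equiv.swap_apply_of_ne_of_ne hsi hst]
        · simp [hmask, hΦ, h, if_neg (show ¬ t < (s : ℕ) by omega)]
      have hπtt : π tt = i := by simp [hπ, Equiv.swap_apply_right]
      rw [hgfun]
      simp only [hmaskeq, hπtt]
      by_cases hω : ω ∈ A
      · have : Φ ω ∈ B := by rw [← hpre] at hω; exact hω
        simp [Set.indicator_of_mem this, Set.indicator_of_mem hω, hf]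
      · have : Φ ω ∉ B := by rw [← hpre] at hω; exact hω
        simp [Set.indicator_of_notMem this, Set.indicator_of_notMem hω]
    have hcomp2 : ∀ ω, gfun (Ψ ω) = A.indicator (f tt) ω := by
      intro ω
      have hmaskeq : mask (Ψ ω) = Φ ω := by
        funext s
        by_cases h : t + 1 ≤ (s : ℕ) <;> simp [hmask, hΦ, hΨ, h]
      rw [hgfun]
      simp only [hmaskeq]
      by_cases hω : ω ∈ A
      · have : Φ ω ∈ B := by rw [← hpre] at hω; exact hω
        simp [Set.indicator_of_mem this, Set.indicator_of_mem hω, hf, hΨ]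
      · have : Φ ω ∉ B := by rw [← hpre] at hω; exact hω
        simp [Set.indicator_of_notMem this, Set.indicator_of_notMem hω]
    have hmeasA : MeasurableSet A := hm A ⟨B, hB, hpre⟩
    calc ∫ ω in A, f i ω ∂volume
        = ∫ ω, A.indicator (f i) ω ∂volume := (integral_indicator hmeasA).symm
      _ = ∫ ω, gfun (fun s => u (π s) ω) ∂volume := by
          congr 1; funext ω; rw [hcomp1 ω]
      _ = ∫ v, gfun v ∂(Measure.map (fun ω => fun s => u (π s) ω) volume) :=
          (integral_map hΨπmeas.aemeasurable hgfmeas.aestronglyMeasurable).symm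
      _ = ∫ v, gfun v ∂(Measure.map Ψ volume) := by rw [hexch π]
      _ = ∫ ω, gfun (Ψ ω) ∂volume :=
          integral_map hΨmeas.aemeasurable hgfmeas.aestronglyMeasurable
      _ = ∫ ω, A.indicator (f tt) ω ∂volume := by
          congr 1; funext ω; rw [hcomp2 ω]
      _ = ∫ ω in A, f tt ω ∂volume := integral_indicator hmeasA
  -- number of indices ≤ t
  have hcard : (Finset.univ.filter (fun i : Fin (n + 1) => (i : ℕ) ≤ t)).card = t + 1 := by
    rw [Finset.card_filter]
    rw [Fin.sum_univ_eq_sum_range (fun i => if i ≤ t then 1 else 0)]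
    rw [← Finset.card_filter]
    have hfil : Finset.filter (fun i => i ≤ t) (Finset.range (n + 1)) =
        Finset.range (t + 1) := by
      ext i
      simp only [Finset.mem_filter, Finset.mem_range]
      omega
    rw [hfil, Finset.card_range]
  -- set-integral equality
  have hseteq : ∀ A : Set Ω, MeasurableSet[MeasurableSpace.comap Φ inferInstance] A →
      (volume : Measure Ω) A < ⊤ →
      ∫ ω in A, g ω ∂volume = ∫ ω in A, f tt ω ∂volume := by
    intro A hA _
    have hVsum : ∀ ω, (V ω : ℝ) = ∑ i : Fin (n + 1),
        (if (i : ℕ) ≤ t then f i ω else 0) := by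
      intro ω
      rw [hV]
      push_cast
      congr 1
      funext i
      by_cases h : (i : ℕ) ≤ t <;> simp [h, hfu]
    calc ∫ ω in A, g ω ∂volume
        = (∫ ω in A, (V ω : ℝ) ∂volume) / ((t : ℝ) + 1) := by
          rw [hg, integral_div]
      _ = (∫ ω in A, (∑ i : Fin (n + 1), (if (i : ℕ) ≤ t then f i ω else 0))
            ∂volume) / ((t : ℝ) + 1) := by
          congr 1
          apply integral_congr_ae
          filter_upwards with ω
          exact hVsum ω
      _ = (∑ i : Fin (n + 1), ∫ ω in A, (if (i : ℕ) ≤ t then f i ω else 0)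
            ∂volume) / ((t : ℝ) + 1) := by
          congr 1
          apply integral_finset_sum
          intro i _
          by_cases h : (i : ℕ) ≤ t
          · simpa [h, IntegrableOn] using (hfint i).integrableOn
          · simp [h]
      _ = (∑ i : Fin (n + 1), (if (i : ℕ) ≤ t then ∫ ω in A, f tt ω ∂volume else 0))
            / ((t : ℝ) + 1) := by
          congr 1
          apply Finset.sum_congr rfl
          intro i _
          by_cases h : (i : ℕ) ≤ t
          · simp only [h, if_true]
            rw [key A hA i h]
          · simp [h]
      _ = ∫ ω in A, f tt ω ∂volume := by
          rw [← Finset.sum_filter, Finset.sum_const, hcard]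
          rw [nsmul_eq_mul]
          field_simp
          push_cast; ring
  -- G-measurability of g (a.e.)
  have hgm : AEStronglyMeasurable[MeasurableSpace.comap Φ inferInstance] g volume := by
    set F : (Fin (n + 1) → ℕ) → ℝ :=
      fun v => ((n : ℝ) - ((∑ s : Fin (n + 1), v s : ℕ) : ℝ)) / ((t : ℝ) + 1) with hF
    have hFmeas : Measurable F := by
      apply Measurable.div_const
      apply Measurable.const_sub
      exact measurable_from_top.comp
        (Finset.measurable_sum _ (fun s _ => measurable_pi_apply s))
    have hWmeas : Measurable[MeasurableSpace.comap Φ inferInstance] (F ∘ Φ) :=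
      hFmeas.comp (comap_measurable Φ)
    refine ⟨F ∘ Φ, hWmeas.stronglyMeasurable, ?_⟩
    filter_upwards [hsum] with ω hω
    have hsplit : ∑ s : Fin (n + 1), u s ω =
        (∑ s : Fin (n + 1), (if (s : ℕ) ≤ t then u s ω else 0)) +
        (∑ s : Fin (n + 1), (if t + 1 ≤ (s : ℕ) then u s ω else 0)) := by
      rw [← Finset.sum_add_distrib]
      apply Finset.sum_congr rfl
      intro s _
      by_cases h : (s : ℕ) ≤ t
      · have h2 : ¬ (t + 1 ≤ (s : ℕ)) := by omega
        simp [h, h2]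
      · have h2 : t + 1 ≤ (s : ℕ) := by omega
        simp [h, h2]
    have hkey : (V ω : ℝ) = (n : ℝ) -
        ((∑ s : Fin (n + 1), Φ ω s : ℕ) : ℝ) := by
      have h1 : V ω + ∑ s : Fin (n + 1), Φ ω s = n := by
        rw [hV]
        rw [hω] at hsplit
        exact hsplit.symm
      have h3 := congrArg (fun x : ℕ => (x : ℝ)) h1
      push_cast at h3 ⊢
      linarith
    show g ω = F (Φ ω)
    simp only [hg, hF]
    rw [hkey]
  exact (ae_eq_condExp_of_forall_setIntegral_eq hm (hfint tt)
    (fun A _ _ => hgint.integrableOn) hseteq hgm).symm
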